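/- Let $k \ge 4$ and let $f \in \mathbb{R}^k$ be a probability vector with $f_k < \gamma$ for some $\gamma$ with $\frac{1}{2k-3} \le \gamma \le \frac1k$. Then $(k-1)! \, S_{k-1}^k(f) \le G_k\left(\frac{1-\gamma}{k-1}\right)$, where $G_k(y) = (k-1)! \, y^{k-2}\big((k-1) - (k^2-2k)y\big)$. -/

import Mathlib

open Finset in
lemma psi_anti (p : ℕ) (A B u v : ℝ) (hB : 0 ≤ B) (hu : 0 ≤ u) (huv : u ≤ v)
    (h : (p : ℝ) * A ≤ ((p : ℝ) + 1) * B * u) :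
    v ^ p * (A - B * v) ≤ u ^ p * (A - B * u) := by
  have hv : 0 ≤ v := hu.trans huv
  set Q : ℝ := ∑ i ∈ range p, v ^ i * u ^ (p - 1 - i) with hQdef
  have hQ0 : 0 ≤ Q := Finset.sum_nonneg fun i _ =>
    mul_nonneg (pow_nonneg hv _) (pow_nonneg hu _)
  have e1 : Q * (v - u) = v ^ p - u ^ p := geom_sum₂_mul v u p
  have eQ' : (∑ i ∈ range (p + 1), v ^ i * u ^ (p - i)) = u * Q + v ^ p := by
    rw [Finset.sum_range_succ, Nat.sub_self, pow_zero, mul_one, hQdef, Finset.mul_sum]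
    congr 1
    refine Finset.sum_congr rfl fun i hi => ?_
    have hip : i < p := Finset.mem_range.mp hi
    rw [show p - i = (p - 1 - i) + 1 by omega, pow_succ]
    ring
  have e2 : (u * Q + v ^ p) * (v - u) = v ^ (p + 1) - u ^ (p + 1) := by
    rw [← eQ']
    have := geom_sum₂_mul v u (p + 1)
    simpa using this
  have huQ : u * Q ≤ (p : ℝ) * v ^ p := by
    rw [hQdef, Finset.mul_sum]
    calc ∑ i ∈ range p, u * (v ^ i * u ^ (p - 1 - i))
        ≤ ∑ i ∈ range p, v ^ p := by
          refine Finset.sum_le_sum fun i hi => ?_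
          have hip : i < p := Finset.mem_range.mp hi
          have h1 : u * (v ^ i * u ^ (p - 1 - i)) = v ^ i * u ^ (p - i) := by
            rw [show p - i = (p - 1 - i) + 1 by omega, pow_succ]; ring
          rw [h1]
          calc v ^ i * u ^ (p - i) ≤ v ^ i * v ^ (p - i) := by
                exact mul_le_mul_of_nonneg_left (pow_le_pow_left₀ hu huv _) (pow_nonneg hv i)
            _ = v ^ p := by rw [← pow_add]; congr 1; omega
      _ = (p : ℝ) * v ^ p := by simp [mul_comm]
  have hkey : 0 ≤ B * (u * Q + v ^ p) - A * Q := by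
    rcases le_or_gt A (B * u) with hA | hA
    · have h1 : A * Q ≤ B * u * Q := mul_le_mul_of_nonneg_right hA hQ0
      have h2 : 0 ≤ B * v ^ p := mul_nonneg hB (pow_nonneg hv p)
      nlinarith
    · rcases hu.eq_or_lt with hu0 | hu0
      · -- u = 0
        rcases Nat.eq_zero_or_pos p with hp | hp
        · subst hp
          simp only [hQdef, Finset.range_zero, Finset.sum_empty] at *
          nlinarith
        · have hA0 : A ≤ 0 := by
            have : (p : ℝ) * A ≤ 0 := by rw [← hu0] at h; linarith [h]
            have hp' : (0:ℝ) < p := by exact_mod_cast hp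
            nlinarith
          have h2 : 0 ≤ B * v ^ p := mul_nonneg hB (pow_nonneg hv p)
          nlinarith [mul_nonpos_of_nonpos_of_nonneg hA0 hQ0, mul_nonneg hB (mul_nonneg hu hQ0)]
      · have h2 : (p : ℝ) * (A - B * u) ≤ B * u := by nlinarith
        have h3 : (A - B * u) * (u * Q) ≤ (A - B * u) * ((p : ℝ) * v ^ p) :=
          mul_le_mul_of_nonneg_left huQ (by linarith)
        have h4 : (A - B * u) * ((p : ℝ) * v ^ p) ≤ B * u * v ^ p := by
          nlinarith [pow_nonneg hv p]
        have h5 : u * ((A - B * u) * Q) ≤ u * (B * v ^ p) := by nlinarith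
        have h6 : (A - B * u) * Q ≤ B * v ^ p := le_of_mul_le_mul_left h5 hu0
        nlinarith
  have expand : u ^ p * (A - B * u) - v ^ p * (A - B * v)
      = (v - u) * (B * (u * Q + v ^ p) - A * Q) := by
    linear_combination A * e1 - B * e2
  nlinarith [mul_nonneg (sub_nonneg.2 huv) hkey]

open Finset in
lemma psi_mono (p : ℕ) (A B u v : ℝ) (hB : 0 ≤ B) (hu : 0 ≤ u) (huv : u ≤ v)
    (h : ((p : ℝ) + 1) * B * v ≤ (p : ℝ) * A) :
    u ^ p * (A - B * u) ≤ v ^ p * (A - B * v) := by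
  have hv : 0 ≤ v := hu.trans huv
  rcases Nat.eq_zero_or_pos p with hp | hp
  · subst hp
    have h1 : 0 ≤ B * u := mul_nonneg hB hu
    simp only [Nat.cast_zero, zero_add, one_mul, zero_mul] at h ⊢
    have h2 : B * v ≤ 0 := by linarith
    simp only [pow_zero, one_mul]
    linarith
  have hp' : (0:ℝ) < p := by exact_mod_cast hp
  set Q : ℝ := ∑ i ∈ range p, v ^ i * u ^ (p - 1 - i) with hQdef
  have hQ0 : 0 ≤ Q := Finset.sum_nonneg fun i _ =>
    mul_nonneg (pow_nonneg hv _) (pow_nonneg hu _)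
  have e1 : Q * (v - u) = v ^ p - u ^ p := geom_sum₂_mul v u p
  -- the other decomposition : ∑_{i=0}^{p} v^i u^{p-i} = v*Q + u^p
  have eQ' : (∑ i ∈ range (p + 1), v ^ i * u ^ (p - i)) = v * Q + u ^ p := by
    rw [Finset.sum_range_succ']
    simp only [pow_zero, one_mul, Nat.sub_zero]
    rw [hQdef, Finset.mul_sum]
    congr 1
    refine Finset.sum_congr rfl fun i hi => ?_
    rw [pow_succ]
    have : p - (i + 1) = p - 1 - i := by omega
    rw [this]; ring
  have e2 : (v * Q + u ^ p) * (v - u) = v ^ (p + 1) - u ^ (p + 1) := by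
    rw [← eQ']
    have := geom_sum₂_mul v u (p + 1)
    simpa using this
  have hQl : (p : ℝ) * u ^ (p - 1) ≤ Q := by
    rw [hQdef]
    calc (p : ℝ) * u ^ (p - 1) = ∑ _i ∈ range p, u ^ (p - 1) := by simp [mul_comm]
      _ ≤ ∑ i ∈ range p, v ^ i * u ^ (p - 1 - i) := by
          refine Finset.sum_le_sum fun i hi => ?_
          have hip : i < p := Finset.mem_range.mp hi
          calc u ^ (p - 1) = u ^ i * u ^ (p - 1 - i) := by rw [← pow_add]; congr 1; omega
            _ ≤ v ^ i * u ^ (p - 1 - i) :=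
              mul_le_mul_of_nonneg_right (pow_le_pow_left₀ hu huv i) (pow_nonneg hu _)
  have hBv0 : 0 ≤ B * v := mul_nonneg hB hv
  have h2 : B * v ≤ (p : ℝ) * (A - B * v) := by nlinarith
  have hABv0 : 0 ≤ A - B * v := by nlinarith
  have hup : u ^ p = u ^ (p - 1) * u := by
    rw [← pow_succ]; congr 1; omega
  have hkey : 0 ≤ A * Q - B * (v * Q + u ^ p) := by
    have h3 : (A - B * v) * ((p : ℝ) * u ^ (p - 1)) ≤ (A - B * v) * Q :=
      mul_le_mul_of_nonneg_left hQl hABv0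
    have h4 : (B * u) * u ^ (p - 1) ≤ (B * v) * u ^ (p - 1) :=
      mul_le_mul_of_nonneg_right (mul_le_mul_of_nonneg_left huv hB) (pow_nonneg hu _)
    have h5 : (B * v) * u ^ (p - 1) ≤ ((p : ℝ) * (A - B * v)) * u ^ (p - 1) :=
      mul_le_mul_of_nonneg_right h2 (pow_nonneg hu _)
    nlinarith [hup]
  have expand : v ^ p * (A - B * v) - u ^ p * (A - B * u)
      = (v - u) * (A * Q - B * (v * Q + u ^ p)) := by
    linear_combination B * e2 - A * e1
  nlinarith [mul_nonneg (sub_nonneg.2 huv) hkey]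

lemma psi_max (p : ℕ) (A B r ρ : ℝ) (hB : 0 ≤ B) (hr : 0 ≤ r) (hρ : 0 ≤ ρ)
    (heq : ((p : ℝ) + 1) * B * ρ = (p : ℝ) * A) :
    r ^ p * (A - B * r) ≤ ρ ^ p * (A - B * ρ) := by
  rcases le_total r ρ with h | h
  · exact psi_mono p A B r ρ hB hr h heq.le
  · exact psi_anti p A B ρ r hB hρ h heq.ge

open Finset in
lemma amgm {ι : Type*} (g : ι → ℝ) :
    ∀ s : Finset ι, (∀ i ∈ s, 0 ≤ g i) →
      ∏ i ∈ s, g i ≤ ((∑ i ∈ s, g i) / s.card) ^ s.card := by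
  intro s
  induction s using Finset.cons_induction_on with
  | empty => simp
  | @cons a s ha IH =>
    intro hg
    have hx : 0 ≤ g a := hg a (mem_cons_self a s)
    have hg' : ∀ i ∈ s, 0 ≤ g i := fun i hi => hg i (mem_cons.2 (Or.inr hi))
    rcases s.eq_empty_or_nonempty with rfl | hs
    · simp
    · set n := s.card with hn
      have hn1 : 1 ≤ n := Finset.card_pos.2 hs
      have hnR : (0:ℝ) < n := by exact_mod_cast hn1
      set T : ℝ := g a + ∑ i ∈ s, g i with hT
      have hT0 : 0 ≤ T := add_nonneg hx (Finset.sum_nonneg hg')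
      set r : ℝ := (∑ i ∈ s, g i) / n with hr
      have hr0 : 0 ≤ r := div_nonneg (Finset.sum_nonneg hg') hnR.le
      have hsum : (∑ i ∈ s, g i) = n * r := by rw [hr, mul_div_assoc']; exact (mul_div_cancel_left₀ _ hnR.ne').symm
      have h1 : ∏ i ∈ s, g i ≤ r ^ n := IH hg'
      have h2 : ∏ i ∈ cons a s ha, g i ≤ g a * r ^ n := by
        rw [prod_cons]
        exact mul_le_mul_of_nonneg_left h1 hx
      have hx' : g a = T - n * r := by rw [hT, hsum]; ring
      set ρ : ℝ := T / (n + 1) with hρdef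
      have hρ0 : 0 ≤ ρ := div_nonneg hT0 (by linarith)
      have heq : ((n : ℝ) + 1) * (n : ℝ) * ρ = (n : ℝ) * T := by
        rw [hρdef]; field_simp
      have h3 : r ^ n * (T - (n : ℝ) * r) ≤ ρ ^ n * (T - (n : ℝ) * ρ) :=
        psi_max n T n r ρ hnR.le hr0 hρ0 heq
      have h4 : ρ ^ n * (T - (n : ℝ) * ρ) = ρ ^ (n + 1) := by
        have : T - (n : ℝ) * ρ = ρ := by rw [hρdef]; field_simp; ring
        rw [this, pow_succ]
      have hcard : ((cons a s ha).card : ℝ) = (n : ℝ) + 1 := by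
        rw [card_cons]; push_cast; ring
      have hTsum : (∑ i ∈ cons a s ha, g i) = T := by rw [sum_cons]
      rw [hTsum, hcard, card_cons]
      calc ∏ i ∈ cons a s ha, g i ≤ g a * r ^ n := h2
        _ = r ^ n * (T - (n : ℝ) * r) := by rw [hx']; ring
        _ ≤ ρ ^ n * (T - (n : ℝ) * ρ) := h3
        _ = ρ ^ (n + 1) := h4
        _ = (T / ((n : ℝ) + 1)) ^ (n + 1) := by rw [hρdef]

open Finset in
lemma esymm_insert {ι : Type*} [DecidableEq ι] (g : ι → ℝ) (a : ι) (s : Finset ι)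
    (ha : a ∉ s) (hs : s.Nonempty) :
    ∑ A ∈ (insert a s).powersetCard s.card, ∏ i ∈ A, g i
      = ∏ i ∈ s, g i + g a * ∑ B ∈ s.powersetCard (s.card - 1), ∏ i ∈ B, g i := by
  have hn1 : 1 ≤ s.card := Finset.card_pos.2 hs
  have hsucc : s.card = (s.card - 1) + 1 := by omega
  rw [show (insert a s).powersetCard s.card
      = (insert a s).powersetCard ((s.card - 1) + 1) by rw [← hsucc]]
  rw [powersetCard_succ_insert ha (s.card - 1)]
  simp only [Nat.succ_eq_add_one]
  rw [← hsucc]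
  have hdisj : Disjoint (s.powersetCard s.card)
      ((s.powersetCard (s.card - 1)).image (insert a)) := by
    rw [Finset.powersetCard_self]
    rw [Finset.disjoint_left]
    intro t ht hmem
    rw [Finset.mem_singleton] at ht
    obtain ⟨B, hB, hBe⟩ := Finset.mem_image.mp hmem
    have haT : a ∈ t := by rw [← hBe]; exact Finset.mem_insert_self a B
    rw [ht] at haT
    exact ha haT
  rw [Finset.sum_union hdisj, Finset.powersetCard_self, Finset.sum_singleton]
  congr 1
  rw [Finset.sum_image]
  · rw [Finset.mul_sum]
    refine Finset.sum_congr rfl fun B hB => ?_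
    have hBs : B ⊆ s := (Finset.mem_powersetCard.mp hB).1
    have haB : a ∉ B := fun hc => ha (hBs hc)
    rw [Finset.prod_insert haB]
  · intro B hB B' hB' hBB'
    have hBs : B ⊆ s := (Finset.mem_powersetCard.mp hB).1
    have hBs' : B' ⊆ s := (Finset.mem_powersetCard.mp hB').1
    have haB : a ∉ B := fun hc => ha (hBs hc)
    have haB' : a ∉ B' := fun hc => ha (hBs' hc)
    rw [← Finset.erase_insert haB, ← Finset.erase_insert haB', hBB']

open Finset in
lemma esymm_le {ι : Type*} [DecidableEq ι] (g : ι → ℝ) :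
    ∀ s : Finset ι, (∀ i ∈ s, 0 ≤ g i) → s.Nonempty →
      ∑ A ∈ s.powersetCard (s.card - 1), ∏ i ∈ A, g i
        ≤ s.card * ((∑ i ∈ s, g i) / s.card) ^ (s.card - 1) := by
  intro s
  induction s using Finset.cons_induction_on with
  | empty => simp
  | @cons a s ha IH =>
    intro hg _
    have hx : 0 ≤ g a := hg a (mem_cons_self a s)
    have hg' : ∀ i ∈ s, 0 ≤ g i := fun i hi => hg i (mem_cons.2 (Or.inr hi))
    rcases s.eq_empty_or_nonempty with rfl | hs
    · simp
    · set n := s.card with hn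
      have hn1 : 1 ≤ n := Finset.card_pos.2 hs
      have hnR : (0:ℝ) < n := by exact_mod_cast hn1
      set T : ℝ := g a + ∑ i ∈ s, g i with hT
      have hT0 : 0 ≤ T := add_nonneg hx (Finset.sum_nonneg hg')
      set r : ℝ := (∑ i ∈ s, g i) / n with hr
      have hr0 : 0 ≤ r := div_nonneg (Finset.sum_nonneg hg') hnR.le
      have hsum : (∑ i ∈ s, g i) = n * r := by rw [hr, mul_div_assoc']; exact (mul_div_cancel_left₀ _ hnR.ne').symm
      have hx' : g a = T - (n : ℝ) * r := by rw [hT, hsum]; ring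
      -- decompose
      have hcard : (cons a s ha).card - 1 = n := by rw [card_cons]; omega
      have hdecomp : ∑ A ∈ (cons a s ha).powersetCard ((cons a s ha).card - 1), ∏ i ∈ A, g i
          = ∏ i ∈ s, g i + g a * ∑ B ∈ s.powersetCard (n - 1), ∏ i ∈ B, g i := by
        rw [hcard, Finset.cons_eq_insert, esymm_insert g a s ha hs]
      have h1 : ∏ i ∈ s, g i ≤ r ^ n := amgm g s hg'
      have h2 : ∑ B ∈ s.powersetCard (n - 1), ∏ i ∈ B, g i ≤ (n : ℝ) * r ^ (n - 1) := IH hg' hs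
      have h3 : g a * ∑ B ∈ s.powersetCard (n - 1), ∏ i ∈ B, g i
          ≤ g a * ((n : ℝ) * r ^ (n - 1)) := mul_le_mul_of_nonneg_left h2 hx
      have hrpow : r ^ n = r ^ (n - 1) * r := by rw [← pow_succ]; congr 1; omega
      set ρ : ℝ := T / ((n : ℝ) + 1) with hρdef
      have hρ0 : 0 ≤ ρ := div_nonneg hT0 (by linarith)
      have heq : (((n - 1 : ℕ) : ℝ) + 1) * ((n : ℝ) ^ 2 - 1) * ρ
          = ((n - 1 : ℕ) : ℝ) * ((n : ℝ) * T) := by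
        have : ((n - 1 : ℕ) : ℝ) = (n : ℝ) - 1 := by
          push_cast [hn1]; ring
        rw [this, hρdef]
        field_simp
        ring
      have hψ : r ^ (n - 1) * ((n : ℝ) * T - ((n : ℝ) ^ 2 - 1) * r)
          ≤ ρ ^ (n - 1) * ((n : ℝ) * T - ((n : ℝ) ^ 2 - 1) * ρ) :=
        psi_max (n - 1) ((n : ℝ) * T) ((n : ℝ) ^ 2 - 1) r ρ
          (by nlinarith [show (1:ℝ) ≤ (n:ℝ) from by exact_mod_cast hn1]) hr0 hρ0 heq
      have hval : ρ ^ (n - 1) * ((n : ℝ) * T - ((n : ℝ) ^ 2 - 1) * ρ) = ρ ^ (n - 1) * T := by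
        congr 1
        rw [hρdef]
        field_simp
        ring
      have hTsum : (∑ i ∈ cons a s ha, g i) = T := by rw [sum_cons]
      have hcardR : ((cons a s ha).card : ℝ) = (n : ℝ) + 1 := by
        rw [card_cons]; push_cast; ring
      rw [hdecomp, hTsum, hcardR, hcard]
      have hfinal : ((n : ℝ) + 1) * (T / ((n : ℝ) + 1)) ^ n = ρ ^ (n - 1) * T := by
        have hρn : ((n : ℝ) + 1) * ρ = T := by rw [hρdef]; field_simp
        rw [← hρdef, show ρ ^ n = ρ ^ (n - 1) * ρ by rw [← pow_succ]; congr 1; omega]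
        rw [← hρn]; ring
      rw [hfinal]
      calc ∏ i ∈ s, g i + g a * ∑ B ∈ s.powersetCard (n - 1), ∏ i ∈ B, g i
          ≤ r ^ n + g a * ((n : ℝ) * r ^ (n - 1)) := by
            have := Finset.sum_nonneg (fun B (_ : B ∈ s.powersetCard (n - 1)) =>
              Finset.prod_nonneg fun i hi => hg' i ((Finset.mem_powersetCard.mp ‹_›).1 hi))
            linarith [h1, h3]
        _ = r ^ (n - 1) * ((n : ℝ) * T - ((n : ℝ) ^ 2 - 1) * r) := by
            rw [hrpow, hx']; ring
        _ ≤ ρ ^ (n - 1) * ((n : ℝ) * T - ((n : ℝ) ^ 2 - 1) * ρ) := hψ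
        _ = ρ ^ (n - 1) * T := hval

/-- If `f ∈ ℝ^k` is a probability vector whose last coordinate satisfies `f_k < γ`
with `1/(2k-3) ≤ γ ≤ 1/k`, then `(k-1)! S_{k-1}^k(f) ≤ G_k((1-γ)/(k-1))`, where
`G_k(y) = (k-1)! y^{k-2} ((k-1) - (k²-2k) y)`. -/
theorem stmt5 (k : ℕ) (hk : 4 ≤ k) (γ : ℝ)
    (hγ1 : 1 / (2 * (k : ℝ) - 3) ≤ γ) (hγ2 : γ ≤ 1 / (k : ℝ))
    (f : Fin k → ℝ) (hf0 : ∀ a, 0 ≤ f a) (hf1 : ∑ a, f a = 1)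
    (hlast : f ⟨k - 1, by omega⟩ < γ) :
    (Nat.factorial (k - 1) : ℝ) *
        ∑ A ∈ Finset.univ.powersetCard (k - 1), ∏ a ∈ A, f a
      ≤ (Nat.factorial (k - 1) : ℝ) * ((1 - γ) / ((k : ℝ) - 1)) ^ (k - 2) *
          (((k : ℝ) - 1) - ((k : ℝ) ^ 2 - 2 * k) * ((1 - γ) / ((k : ℝ) - 1))) := by
  have hkR : (4 : ℝ) ≤ (k : ℝ) := by exact_mod_cast hk
  set a₀ : Fin k := ⟨k - 1, by omega⟩ with ha₀
  set s : Finset (Fin k) := Finset.univ.erase a₀ with hs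
  have has : a₀ ∉ s := Finset.notMem_erase a₀ _
  have hins : insert a₀ s = Finset.univ := Finset.insert_erase (Finset.mem_univ a₀)
  have hcard : s.card = k - 1 := by
    rw [hs, Finset.card_erase_of_mem (Finset.mem_univ a₀), Finset.card_univ, Fintype.card_fin]
  have hsne : s.Nonempty := by
    rw [← Finset.card_pos, hcard]; omega
  set t : ℝ := f a₀ with ht
  have ht0 : 0 ≤ t := hf0 a₀
  have hTsum : ∑ i ∈ s, f i = 1 - t := by
    have := Finset.sum_erase_add Finset.univ f (Finset.mem_univ a₀)
    rw [hf1] at this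
    rw [hs]; linarith
  have ht1 : t ≤ 1 := by
    have h0 : 0 ≤ ∑ i ∈ s, f i := Finset.sum_nonneg fun i _ => hf0 i
    linarith [hTsum]
  -- decompose the symmetric sum
  have hdecomp : ∑ A ∈ Finset.univ.powersetCard (k - 1), ∏ a ∈ A, f a
      = ∏ i ∈ s, f i + t * ∑ B ∈ s.powersetCard (k - 2), ∏ i ∈ B, f i := by
    rw [← hins, show k - 1 = s.card from hcard.symm, esymm_insert f a₀ s has hsne,
      show s.card - 1 = k - 2 by omega]
  set n : ℕ := k - 1 with hn
  have hnR : ((n : ℝ)) = (k : ℝ) - 1 := by rw [hn]; push_cast [show 1 ≤ k by omega]; ring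
  have hnpos : (0:ℝ) < (n : ℝ) := by rw [hnR]; linarith
  set r : ℝ := (1 - t) / (n : ℝ) with hr
  have hr0 : 0 ≤ r := div_nonneg (by linarith) hnpos.le
  have h1 : ∏ i ∈ s, f i ≤ r ^ n := by
    have := amgm f s (fun i _ => hf0 i)
    rwa [hTsum, hcard, ← hr] at this
  have h2 : ∑ B ∈ s.powersetCard (k - 2), ∏ i ∈ B, f i ≤ (n : ℝ) * r ^ (n - 1) := by
    have := esymm_le f s (fun i _ => hf0 i) hsne
    rwa [hTsum, hcard, ← hr, show n - 1 = k - 2 by omega] at this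
  have h3 : t * ∑ B ∈ s.powersetCard (k - 2), ∏ i ∈ B, f i
      ≤ t * ((n : ℝ) * r ^ (n - 1)) := mul_le_mul_of_nonneg_left h2 ht0
  have hrpow : r ^ n = r ^ (n - 1) * r := by rw [← pow_succ]; congr 1; omega
  have hnr : (n : ℝ) * r = 1 - t := by rw [hr]; field_simp
  -- now the single-variable comparison
  set u : ℝ := (1 - γ) / ((k : ℝ) - 1) with hu
  have hγ0 : γ ≤ 1 := by
    have : 1 / (k : ℝ) ≤ 1 := by
      rw [div_le_one (by linarith)]; linarith
    linarith
  have hu0 : 0 ≤ u := div_nonneg (by linarith) (by linarith)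
  have hlt : t < γ := hlast
  have hulev : u ≤ r := by
    rw [hu, hr, hnR]
    exact (div_le_div_iff_of_pos_right (by linarith : (0:ℝ) < (k:ℝ) - 1)).mpr (by linarith)
  have humul : u * ((k : ℝ) - 1) = 1 - γ := by
    rw [hu]; exact div_mul_cancel₀ _ (by linarith)
  have hkγ : γ * (k : ℝ) ≤ 1 := (le_div_iff₀ (by linarith : (0:ℝ) < (k:ℝ))).mp hγ2
  have hyp : ((k - 2 : ℕ) : ℝ) * ((k : ℝ) - 1)
      ≤ (((k - 2 : ℕ) : ℝ) + 1) * ((k : ℝ) ^ 2 - 2 * k) * u := by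
    have hc : ((k - 2 : ℕ) : ℝ) = (k : ℝ) - 2 := by push_cast [show 2 ≤ k by omega]; ring
    rw [hc]
    nlinarith [humul, hkγ, hkR]
  have hkey : r ^ (k - 2) * (((k : ℝ) - 1) - ((k : ℝ) ^ 2 - 2 * k) * r)
      ≤ u ^ (k - 2) * (((k : ℝ) - 1) - ((k : ℝ) ^ 2 - 2 * k) * u) :=
    psi_anti (k - 2) ((k : ℝ) - 1) ((k : ℝ) ^ 2 - 2 * k) u r
      (by nlinarith) hu0 hulev hyp
  have ht' : t = 1 - (n : ℝ) * r := by linarith [hnr]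
  have hchain : ∑ A ∈ Finset.univ.powersetCard (k - 1), ∏ a ∈ A, f a
      ≤ u ^ (k - 2) * (((k : ℝ) - 1) - ((k : ℝ) ^ 2 - 2 * k) * u) := by
    rw [hdecomp]
    calc ∏ i ∈ s, f i + t * ∑ B ∈ s.powersetCard (k - 2), ∏ i ∈ B, f i
        ≤ r ^ n + t * ((n : ℝ) * r ^ (n - 1)) := by linarith [h1, h3]
      _ = r ^ (n - 1) * (((k : ℝ) - 1) - ((k : ℝ) ^ 2 - 2 * k) * r) := by
          rw [hrpow, ht', hnR]; ring
      _ = r ^ (k - 2) * (((k : ℝ) - 1) - ((k : ℝ) ^ 2 - 2 * k) * r) := by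
          rw [show n - 1 = k - 2 by omega]
      _ ≤ u ^ (k - 2) * (((k : ℝ) - 1) - ((k : ℝ) ^ 2 - 2 * k) * u) := hkey
  have hfact : (0 : ℝ) ≤ (Nat.factorial (k - 1) : ℝ) := by positivity
  calc (Nat.factorial (k - 1) : ℝ) * ∑ A ∈ Finset.univ.powersetCard (k - 1), ∏ a ∈ A, f a
      ≤ (Nat.factorial (k - 1) : ℝ) *
          (u ^ (k - 2) * (((k : ℝ) - 1) - ((k : ℝ) ^ 2 - 2 * k) * u)) :=
        mul_le_mul_of_nonneg_left hchain hfact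
    _ = (Nat.factorial (k - 1) : ℝ) * u ^ (k - 2) *
          (((k : ℝ) - 1) - ((k : ℝ) ^ 2 - 2 * k) * u) := by ring
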